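/- Quadratic lower bound for the expected pinball loss around the quantile (equation (45) in the proof of the paper's Theorem 2): Let β be an integrable real random variable whose law has a density p with respect to Lebesgue measure, let α ∈ [0,1], and let a, a* be real numbers with P(β ≥ a*) = α. If p(x) ≥ p₁ > 0 for almost every x in the closed interval with endpoints a and a*, then E[ℓ_α(β, a)] − E[ℓ_α(β, a*)] ≥ (p₁/2)·(a − a*)². -/

import Mathlib

open MeasureTheory Set

lemma vol_right (c d : ℝ) (h : c ≤ d) :
    ∫ x in Set.Ioc c d, (d - x) = (d - c)^2 / 2 := by
  rw [← intervalIntegral.integral_of_le h,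
    intervalIntegral.integral_sub intervalIntegrable_const intervalIntegral.intervalIntegrable_id,
    intervalIntegral.integral_const, integral_id]
  simp [smul_eq_mul]; ring

lemma vol_left (c d : ℝ) (h : c ≤ d) :
    ∫ x in Set.Ioc c d, (x - c) = (d - c)^2 / 2 := by
  rw [← intervalIntegral.integral_of_le h,
    intervalIntegral.integral_sub intervalIntegral.intervalIntegrable_id intervalIntegrable_const,
    intervalIntegral.integral_const, integral_id]
  simp [smul_eq_mul]; ring

/-- Quadratic lower bound for the expected pinball loss around the quantile
(equation (45)): if the law of `β` has a density `p` bounded below by `p₁ > 0`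
on the closed interval with endpoints `a` and `astar`, and `P(β ≥ astar) = α`,
then `E[ℓ_α(β, a)] − E[ℓ_α(β, astar)] ≥ (p₁/2)·(a − astar)²`. -/
theorem pinball_quadratic_lower_bound
    {Ω : Type*} [MeasurableSpace Ω] (μ : Measure Ω) [IsProbabilityMeasure μ]
    (β : Ω → ℝ) (hβ : Integrable β μ)
    (p : ℝ → ℝ) (p₁ : ℝ) (hp₁ : 0 < p₁)
    (hdens : Measure.map β μ =
      (volume : Measure ℝ).withDensity (fun x => ENNReal.ofReal (p x)))
    (α a astar : ℝ) (hα0 : 0 ≤ α) (hα1 : α ≤ 1)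
    (hq : (μ {ω | astar ≤ β ω}).toReal = α)
    (hplb : ∀ᵐ x ∂((volume : Measure ℝ).restrict (Set.uIcc a astar)),
      p₁ ≤ p x) :
    (∫ ω, max ((1 - α) * (β ω - a)) (α * (a - β ω)) ∂μ) -
        (∫ ω, max ((1 - α) * (β ω - astar)) (α * (astar - β ω)) ∂μ) ≥
      (p₁ / 2) * (a - astar) ^ 2 := by
  have hβm : AEMeasurable β μ := hβ.aestronglyMeasurable.aemeasurable
  set ν : Measure ℝ := μ.map β with hν
  have hprob : IsProbabilityMeasure ν := Measure.isProbabilityMeasure_map hβm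
  have hac : ν ≪ (volume : Measure ℝ) := by
    rw [hdens]; exact withDensity_absolutelyContinuous _ _
  have hid : Integrable (fun x : ℝ => x) ν :=
    (integrable_map_measure aestronglyMeasurable_id hβm).mpr hβ
  -- transfer expectations to ν
  have key : ∀ b : ℝ, (∫ ω, max ((1 - α) * (β ω - b)) (α * (b - β ω)) ∂μ)
      = (1 - α) * ((∫ x, x ∂ν) - b) + ∫ x, max (b - x) 0 ∂ν := by
    intro b
    have hcont : Continuous (fun x : ℝ => max ((1 - α) * (x - b)) (α * (b - x))) := by
      fun_prop
    have htrans : (∫ ω, max ((1 - α) * (β ω - b)) (α * (b - β ω)) ∂μ)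
        = ∫ x, max ((1 - α) * (x - b)) (α * (b - x)) ∂ν := by
      rw [hν, integral_map hβm hcont.aestronglyMeasurable]
    rw [htrans]
    have hpt : (fun x : ℝ => max ((1 - α) * (x - b)) (α * (b - x)))
        = fun x => (1 - α) * (x - b) + max (b - x) 0 := by
      funext x
      rcases le_total x b with h | h
      · rw [max_eq_right (by nlinarith : (1 - α) * (x - b) ≤ α * (b - x)),
          max_eq_left (by linarith : (0:ℝ) ≤ b - x)]
        ring
      · rw [max_eq_left (by nlinarith : α * (b - x) ≤ (1 - α) * (x - b)),
          max_eq_right (by linarith : b - x ≤ (0:ℝ))]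
        ring
    have i1 : Integrable (fun x : ℝ => (1 - α) * (x - b)) ν :=
      (hid.sub (integrable_const b)).const_mul _
    have i2 : Integrable (fun x : ℝ => max (b - x) 0) ν :=
      ((integrable_const b).sub hid).pos_part
    have hsubint : ∫ x, (x - b) ∂ν = (∫ x, x ∂ν) - b := by
      rw [integral_sub hid (integrable_const b), integral_const]
      simp
    rw [hpt, integral_add i1 i2, integral_const_mul, hsubint]
  -- quantile fact
  have hIci : (ν (Set.Ici astar)).toReal = α := by
    rw [hν, Measure.map_apply_of_aemeasurable hβm measurableSet_Ici]
    exact hq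
  have hsing : ν {astar} = 0 := hac (by simp)
  have hIoiIci : ν (Set.Ioi astar) = ν (Set.Ici astar) := by
    refine le_antisymm (measure_mono Set.Ioi_subset_Ici_self) ?_
    have hsub : Set.Ici astar ⊆ Set.Ioi astar ∪ {astar} := fun x hx =>
      (lt_or_eq_of_le hx).elim Or.inl (fun h => Or.inr h.symm)
    calc ν (Set.Ici astar) ≤ ν (Set.Ioi astar ∪ {astar}) := measure_mono hsub
      _ ≤ ν (Set.Ioi astar) + ν {astar} := measure_union_le _ _
      _ = ν (Set.Ioi astar) := by rw [hsing, add_zero]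
  have hF : (ν (Set.Iic astar)).toReal = 1 - α := by
    have h3 : ν (Set.Iic astar) + ν (Set.Ioi astar) = 1 := by
      have := measure_add_measure_compl (μ := ν) (measurableSet_Iic (a := astar))
      rwa [Set.compl_Iic, measure_univ] at this
    have h4 : (ν (Set.Iic astar)).toReal + (ν (Set.Ioi astar)).toReal = 1 := by
      rw [← ENNReal.toReal_add (measure_ne_top _ _) (measure_ne_top _ _), h3]
      simp
    rw [hIoiIci, hIci] at h4
    linarith
  -- lower bound machinery
  have hbound : ∀ c d : ℝ, Set.Ioc c d ⊆ Set.uIcc a astar →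
      ∀ f : ℝ → ℝ, Integrable f ν → (∀ x ∈ Set.Ioc c d, 0 ≤ f x) →
      p₁ * ∫ x in Set.Ioc c d, f x ≤ ∫ x in Set.Ioc c d, f x ∂ν := by
    intro c d hsub f hf hf0
    have hle : (ENNReal.ofReal p₁ • (volume : Measure ℝ)).restrict (Set.Ioc c d)
        ≤ ν.restrict (Set.Ioc c d) := by
      refine Measure.le_iff.mpr fun s hs => ?_
      rw [Measure.restrict_apply hs, Measure.restrict_apply hs, Measure.smul_apply,
        smul_eq_mul, hdens, withDensity_apply _ (hs.inter measurableSet_Ioc)]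
      have hae : ∀ᵐ x ∂((volume : Measure ℝ).restrict (s ∩ Set.Ioc c d)), p₁ ≤ p x :=
        ae_mono (Measure.restrict_mono (Set.inter_subset_right.trans hsub) le_rfl) hplb
      calc ENNReal.ofReal p₁ * volume (s ∩ Set.Ioc c d)
          = ∫⁻ _ in s ∩ Set.Ioc c d, ENNReal.ofReal p₁ ∂(volume : Measure ℝ) := by
            rw [setLIntegral_const, mul_comm]
        _ ≤ ∫⁻ x in s ∩ Set.Ioc c d, ENNReal.ofReal (p x) ∂(volume : Measure ℝ) :=
            lintegral_mono_ae (hae.mono fun x hx => ENNReal.ofReal_le_ofReal hx)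
    have hmono := integral_mono_measure hle
      (ae_restrict_of_forall_mem measurableSet_Ioc hf0) (hf.restrict)
    rwa [Measure.restrict_smul, integral_smul_measure, ENNReal.toReal_ofReal hp₁.le,
      smul_eq_mul] at hmono
  -- split lemma
  rw [key a, key astar, ge_iff_le]
  have hsplit : ∀ b m : ℝ, m ≤ b →
      (∫ x, max (b - x) 0 ∂ν) - (∫ x, max (m - x) 0 ∂ν)
        = (b - m) * (ν (Set.Iic m)).toReal + ∫ x in Set.Ioc m b, (b - x) ∂ν := by
    intro b m hmb
    have hpt : (fun x : ℝ => max (b - x) 0 - max (m - x) 0)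
        = fun x => Set.indicator (Set.Iic m) (fun _ => b - m) x
            + Set.indicator (Set.Ioc m b) (fun x => b - x) x := by
      funext x
      rcases le_or_gt x m with h1 | h1
      · rw [Set.indicator_of_mem (Set.mem_Iic.mpr h1),
          Set.indicator_of_notMem (fun hx => absurd hx.1 (not_lt.mpr h1)),
          max_eq_left (by linarith : (0:ℝ) ≤ b - x),
          max_eq_left (by linarith : (0:ℝ) ≤ m - x)]
        ring
      · rcases le_or_gt x b with h2 | h2
        · rw [Set.indicator_of_notMem (fun hx => absurd (Set.mem_Iic.mp hx) (not_le.mpr h1)),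
            Set.indicator_of_mem (Set.mem_Ioc.mpr ⟨h1, h2⟩),
            max_eq_left (by linarith : (0:ℝ) ≤ b - x),
            max_eq_right (by linarith : m - x ≤ (0:ℝ))]
          ring
        · rw [Set.indicator_of_notMem (fun hx => absurd (Set.mem_Iic.mp hx) (not_le.mpr h1)),
            Set.indicator_of_notMem (fun hx => absurd hx.2 (not_le.mpr h2)),
            max_eq_right (by linarith : b - x ≤ (0:ℝ)),
            max_eq_right (by linarith : m - x ≤ (0:ℝ))]
          ring
    have ib : Integrable (fun x : ℝ => max (b - x) 0) ν :=
      ((integrable_const b).sub hid).pos_part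
    have im : Integrable (fun x : ℝ => max (m - x) 0) ν :=
      ((integrable_const m).sub hid).pos_part
    have hint1 : Integrable (Set.indicator (Set.Iic m) (fun _ : ℝ => b - m)) ν :=
      (integrable_const (b - m)).indicator measurableSet_Iic
    have hint2 : Integrable (Set.indicator (Set.Ioc m b) (fun x : ℝ => b - x)) ν :=
      ((integrable_const b).sub hid).indicator measurableSet_Ioc
    rw [← integral_sub ib im]
    calc (∫ x, (max (b - x) 0 - max (m - x) 0) ∂ν)
        = ∫ x, (Set.indicator (Set.Iic m) (fun _ => b - m) x
            + Set.indicator (Set.Ioc m b) (fun x => b - x) x) ∂ν := by rw [hpt]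
      _ = (∫ x, Set.indicator (Set.Iic m) (fun _ => b - m) x ∂ν)
            + ∫ x, Set.indicator (Set.Ioc m b) (fun x => b - x) x ∂ν :=
          integral_add hint1 hint2
      _ = (b - m) * (ν (Set.Iic m)).toReal + ∫ x in Set.Ioc m b, (b - x) ∂ν := by
          rw [integral_indicator measurableSet_Iic, integral_indicator measurableSet_Ioc,
            setIntegral_const, smul_eq_mul, measureReal_def]
          ring
  rcases le_total astar a with hc | hc
  · -- case astar ≤ a
    have h1 := hsplit a astar hc
    have h2 : (1 - α) * ((∫ x, x ∂ν) - a) + (∫ x, max (a - x) 0 ∂ν)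
        - ((1 - α) * ((∫ x, x ∂ν) - astar) + ∫ x, max (astar - x) 0 ∂ν)
        = ∫ x in Set.Ioc astar a, (a - x) ∂ν := by
      rw [show (1 - α) * ((∫ x, x ∂ν) - a) + (∫ x, max (a - x) 0 ∂ν)
          - ((1 - α) * ((∫ x, x ∂ν) - astar) + ∫ x, max (astar - x) 0 ∂ν)
          = ((∫ x, max (a - x) 0 ∂ν) - ∫ x, max (astar - x) 0 ∂ν)
            - (1 - α) * (a - astar) by ring, h1, hF]
      ring
    rw [h2]
    have hsub : Set.Ioc astar a ⊆ Set.uIcc a astar := by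
      rw [Set.uIcc_of_ge hc]
      exact Set.Ioc_subset_Icc_self
    have hb := hbound astar a hsub (fun x => a - x) ((integrable_const a).sub hid)
      (fun x hx => by
        simp only [Set.mem_Ioc] at hx
        show (0:ℝ) ≤ a - x
        linarith [hx.2])
    rw [vol_right astar a hc] at hb
    calc p₁ / 2 * (a - astar) ^ 2 = p₁ * ((a - astar) ^ 2 / 2) := by ring
      _ ≤ ∫ x in Set.Ioc astar a, (a - x) ∂ν := hb
  · -- case a ≤ astar
    have h1 := hsplit astar a hc
    have hIocm : (ν (Set.Ioc a astar)).toReal = (1 - α) - (ν (Set.Iic a)).toReal := by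
      have hu : ν (Set.Iic astar) = ν (Set.Iic a) + ν (Set.Ioc a astar) := by
        rw [← measure_union ((Set.Iic_disjoint_Ioi le_rfl).mono_right Set.Ioc_subset_Ioi_self)
          measurableSet_Ioc, Set.Iic_union_Ioc_eq_Iic hc]
      have h5 := congrArg ENNReal.toReal hu
      rw [ENNReal.toReal_add (measure_ne_top _ _) (measure_ne_top _ _), hF] at h5
      linarith
    have h2 : (1 - α) * ((∫ x, x ∂ν) - a) + (∫ x, max (a - x) 0 ∂ν)
        - ((1 - α) * ((∫ x, x ∂ν) - astar) + ∫ x, max (astar - x) 0 ∂ν)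
        = (ν (Set.Ioc a astar)).toReal * (astar - a)
          - ∫ x in Set.Ioc a astar, (astar - x) ∂ν := by
      rw [show (1 - α) * ((∫ x, x ∂ν) - a) + (∫ x, max (a - x) 0 ∂ν)
          - ((1 - α) * ((∫ x, x ∂ν) - astar) + ∫ x, max (astar - x) 0 ∂ν)
          = (1 - α) * (astar - a)
            - ((∫ x, max (astar - x) 0 ∂ν) - ∫ x, max (a - x) 0 ∂ν) by ring, h1, hIocm]
      ring
    rw [h2]
    have hc0 : ∫ _x in Set.Ioc a astar, (astar - a) ∂ν
        = (ν (Set.Ioc a astar)).toReal * (astar - a) := by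
      rw [setIntegral_const, smul_eq_mul, measureReal_def]
    have iast : Integrable (fun x : ℝ => astar - x) (ν.restrict (Set.Ioc a astar)) :=
      ((integrable_const astar).sub hid).restrict
    have h3 : (ν (Set.Ioc a astar)).toReal * (astar - a)
          - (∫ x in Set.Ioc a astar, (astar - x) ∂ν)
        = ∫ x in Set.Ioc a astar, (x - a) ∂ν := by
      rw [← hc0, ← integral_sub (integrable_const _) iast]
      congr 1
      funext x
      ring
    rw [h3]
    have hsub : Set.Ioc a astar ⊆ Set.uIcc a astar := by
      rw [Set.uIcc_of_le hc]
      exact Set.Ioc_subset_Icc_self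
    have hb := hbound a astar hsub (fun x => x - a) (hid.sub (integrable_const a))
      (fun x hx => by
        simp only [Set.mem_Ioc] at hx
        show (0:ℝ) ≤ x - a
        linarith [hx.1])
    rw [vol_left a astar hc] at hb
    calc p₁ / 2 * (a - astar) ^ 2 = p₁ * ((astar - a) ^ 2 / 2) := by ring
      _ ≤ ∫ x in Set.Ioc a astar, (x - a) ∂ν := hb
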